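/- Let α ∈ (0,1], u > 0, and let F : [0,1]^n → [0,1] be differentiable. Then for every fixed τ ∈ [0,1], the map x ↦ H̃(x,τ) is differentiable and its gradient is given by the closed form ∇ₓH̃(x,τ) = (1/α)·( 1 − min{ max{ (F(x) − τ)/u, 0 }, 1 } )·∇F(x) for all x ∈ [0,1]^n. -/

import Mathlib

open MeasureTheory

/-- The unit cube `[0,1]^n` in `ℝⁿ` (with the Euclidean norm). -/
def cube (n : ℕ) : Set (EuclideanSpace ℝ (Fin n)) :=
  {x | ∀ i, x i ∈ Set.Icc (0:ℝ) 1}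

/-- The `u`-smoothed CVaR auxiliary function
`H̃(x,τ) = (1/u)·∫₀ᵘ (τ + ξ - (1/α)·max{τ + ξ - F(x), 0}) dξ`,
expressed as a function of the value `v = F(x)`. -/
noncomputable def smoothAuxH (α u : ℝ) (v τ : ℝ) : ℝ :=
  (1 / u) * ∫ ξ in (0:ℝ)..u, (τ + ξ - (1 / α) * max (τ + ξ - v) 0)

/-- `x ↦ max x 0 ^ 2 / 2` is differentiable with derivative `max x 0`. -/
lemma hasDerivAt_max_sq (x : ℝ) :
    HasDerivAt (fun y : ℝ => max y 0 ^ 2 / 2) (max x 0) x := by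
  rcases lt_trichotomy x 0 with hx | hx | hx
  · have h : (fun y : ℝ => max y 0 ^ 2 / 2) =ᶠ[nhds x] fun _ => (0:ℝ) := by
      filter_upwards [eventually_lt_nhds hx] with y hy
      simp [max_eq_right hy.le]
    have := (hasDerivAt_const x (0:ℝ)).congr_of_eventuallyEq h
    simpa [max_eq_right hx.le] using this
  · subst hx
    rw [hasDerivAt_iff_isLittleO]
    rw [Asymptotics.isLittleO_iff]
    intro c hc
    filter_upwards [Metric.eventually_nhds_iff.mpr
      ⟨2 * c, by linarith, fun {y} hy => hy⟩] with y hy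
    simp only [Real.dist_eq, sub_zero] at hy
    have h1 : |max y 0| ≤ |y| := by
      rcases le_or_gt y 0 with h | h
      · simp [max_eq_right h]
      · simp [max_eq_left h.le]
    have h2 : max y 0 ^ 2 ≤ 2 * c * |y| := by
      have h3 : max y 0 ^ 2 = |max y 0| ^ 2 := (sq_abs _).symm
      nlinarith [abs_nonneg y, abs_nonneg (max y 0)]
    have hgoal : ‖max y 0 ^ 2 / 2 - max (0:ℝ) 0 ^ 2 / 2 - (y - 0) • max (0:ℝ) 0‖
        ≤ c * ‖y‖ := by
      simp only [max_self, smul_zero, sub_zero, Real.norm_eq_abs]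
      have : (0:ℝ) ^ 2 / 2 = 0 := by norm_num
      rw [this, sub_zero, abs_of_nonneg (by positivity : (0:ℝ) ≤ max y 0 ^ 2 / 2)]
      linarith
    simpa using hgoal
  · have h : (fun y : ℝ => max y 0 ^ 2 / 2) =ᶠ[nhds x] fun y => y ^ 2 / 2 := by
      filter_upwards [eventually_gt_nhds hx] with y hy
      simp [max_eq_left hy.le]
    have h2 : HasDerivAt (fun y : ℝ => y ^ 2 / 2) x x := by
      have := ((hasDerivAt_pow 2 x).div_const 2)
      simpa using this
    have := h2.congr_of_eventuallyEq h
    simpa [max_eq_left hx.le] using this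

lemma integral_max (u a : ℝ) :
    (∫ ξ in (0:ℝ)..u, max (ξ - a) 0)
      = max (u - a) 0 ^ 2 / 2 - max (0 - a) 0 ^ 2 / 2 := by
  apply intervalIntegral.integral_eq_sub_of_hasDerivAt
  · intro ξ _
    have h1 : HasDerivAt (fun ξ : ℝ => ξ - a) 1 ξ := (hasDerivAt_id ξ).sub_const a
    have := (hasDerivAt_max_sq (ξ - a)).comp ξ h1
    simpa [Function.comp_def] using this
  · exact (((continuous_id.sub continuous_const).max continuous_const)).intervalIntegrable 0 u

lemma smoothAuxH_eq (α u v τ : ℝ) (hα : 0 < α) (hu : 0 < u) :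
    smoothAuxH α u v τ
      = τ + u / 2 - (1 / (α * u)) *
          (max (u - (v - τ)) 0 ^ 2 / 2 - max (-(v - τ)) 0 ^ 2 / 2) := by
  unfold smoothAuxH
  have hint1 : IntervalIntegrable (fun ξ : ℝ => τ + ξ) volume 0 u :=
    (continuous_const.add continuous_id).intervalIntegrable 0 u
  have hint2 : IntervalIntegrable (fun ξ : ℝ => (1 / α) * max (τ + ξ - v) 0) volume 0 u :=
    (continuous_const.mul (((continuous_const.add continuous_id).sub
      continuous_const).max continuous_const)).intervalIntegrable 0 u
  rw [intervalIntegral.integral_sub hint1 hint2, intervalIntegral.integral_const_mul]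
  have h1 : (∫ ξ in (0:ℝ)..u, (τ + ξ)) = τ * u + u ^ 2 / 2 := by
    rw [intervalIntegral.integral_add
      ((continuous_const.intervalIntegrable 0 u :
        IntervalIntegrable (fun _ : ℝ => τ) volume 0 u))
      ((continuous_id'.intervalIntegrable 0 u))]
    simp [integral_id]
    ring
  have h2 : (∫ ξ in (0:ℝ)..u, max (τ + ξ - v) 0)
      = max (u - (v - τ)) 0 ^ 2 / 2 - max (-(v - τ)) 0 ^ 2 / 2 := by
    have h3 : (fun ξ : ℝ => max (τ + ξ - v) 0) = fun ξ => max (ξ - (v - τ)) 0 := by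
      funext ξ; ring_nf
    rw [h3, integral_max]
    ring_nf
  rw [h1, h2]
  field_simp

lemma hasDerivAt_smoothAuxH (α u τ : ℝ) (hα : 0 < α) (hu : 0 < u) (v : ℝ) :
    HasDerivAt (fun w => smoothAuxH α u w τ)
      ((1 / α) * (1 - min (max ((v - τ) / u) 0) 1)) v := by
  have hfun : (fun w => smoothAuxH α u w τ)
      = fun w => τ + u / 2 - (1 / (α * u)) *
          (max (u - (w - τ)) 0 ^ 2 / 2 - max (-(w - τ)) 0 ^ 2 / 2) := by
    funext w; exact smoothAuxH_eq α u w τ hα hu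
  rw [hfun]
  have h1 : HasDerivAt (fun w : ℝ => u - (w - τ)) (-1) v := by
    have := ((hasDerivAt_id v).sub_const τ).const_sub u
    simpa using this
  have h2 : HasDerivAt (fun w : ℝ => -(w - τ)) (-1) v := by
    have := ((hasDerivAt_id v).sub_const τ).neg
    exact this
  have hA : HasDerivAt (fun w : ℝ => max (u - (w - τ)) 0 ^ 2 / 2)
      (max (u - (v - τ)) 0 * (-1)) v :=
    by have := (hasDerivAt_max_sq (u - (v - τ))).comp v h1; exact this
  have hB : HasDerivAt (fun w : ℝ => max (-(w - τ)) 0 ^ 2 / 2)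
      (max (-(v - τ)) 0 * (-1)) v :=
    by have := (hasDerivAt_max_sq (-(v - τ))).comp v h2; exact this
  have hC := ((hA.sub hB).const_mul (1 / (α * u))).const_sub (τ + u / 2)
  refine hC.congr_deriv ?_
  symm
  have hu' : u ≠ 0 := ne_of_gt hu
  have hα' : α ≠ 0 := ne_of_gt hα
  set a := v - τ with ha
  rcases le_or_gt a 0 with h | h
  · have e1 : max (u - a) 0 = u - a := max_eq_left (by linarith)
    have e2 : max (-a) 0 = -a := max_eq_left (by linarith)
    have e3 : max (a / u) 0 = 0 :=
      max_eq_right (div_nonpos_of_nonpos_of_nonneg h hu.le)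
    rw [e1, e2, e3, min_eq_left (by norm_num : (0:ℝ) ≤ 1)]
    field_simp
    ring
  · rcases le_or_gt a u with h2 | h2
    · have e1 : max (u - a) 0 = u - a := max_eq_left (by linarith)
      have e2 : max (-a) 0 = 0 := max_eq_right (by linarith)
      have e3 : max (a / u) 0 = a / u := max_eq_left (div_nonneg h.le hu.le)
      have e4 : min (a / u) 1 = a / u := min_eq_left ((div_le_one hu).mpr h2)
      rw [e1, e2, e3, e4]
      field_simp
      ring
    · have e1 : max (u - a) 0 = 0 := max_eq_right (by linarith)
      have e2 : max (-a) 0 = 0 := max_eq_right (by linarith)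
      have e3 : max (a / u) 0 = a / u := max_eq_left (div_nonneg h.le hu.le)
      have e4 : min (a / u) 1 = 1 := min_eq_right ((one_le_div hu).mpr h2.le)
      rw [e1, e2, e3, e4]
      ring

/-- If `F : [0,1]ⁿ → [0,1]` is differentiable, then for every fixed `τ ∈ [0,1]` the map
`x ↦ H̃(x,τ)` is differentiable with gradient
`(1/α)·(1 - min{max{(F(x) - τ)/u, 0}, 1})·∇F(x)`. -/
theorem stmt2 (n : ℕ) (α u : ℝ) (hα : α ∈ Set.Ioc (0:ℝ) 1) (hu : 0 < u)
    (F : EuclideanSpace ℝ (Fin n) → ℝ)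
    (hrange : ∀ x ∈ cube n, F x ∈ Set.Icc (0:ℝ) 1)
    (hdiff : Differentiable ℝ F)
    (τ : ℝ) (hτ : τ ∈ Set.Icc (0:ℝ) 1) :
    ∀ x ∈ cube n,
      DifferentiableAt ℝ (fun y => smoothAuxH α u (F y) τ) x ∧
      gradient (fun y => smoothAuxH α u (F y) τ) x
        = ((1 / α) * (1 - min (max ((F x - τ) / u) 0) 1)) • gradient F x := by
  intro x hx
  set c : ℝ := (1 / α) * (1 - min (max ((F x - τ) / u) 0) 1) with hc
  have hh : HasDerivAt (fun w => smoothAuxH α u w τ) c (F x) :=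
    hasDerivAt_smoothAuxH α u τ hα.1 hu (F x)
  have hF : HasGradientAt F (gradient F x) x := (hdiff x).hasGradientAt
  have hFf : HasFDerivAt F ((InnerProductSpace.toDual ℝ _) (gradient F x)) x :=
    hF.hasFDerivAt
  have hcomp : HasFDerivAt (fun y => smoothAuxH α u (F y) τ)
      (c • (InnerProductSpace.toDual ℝ _) (gradient F x)) x :=
    hh.comp_hasFDerivAt x hFf
  have heq : c • (InnerProductSpace.toDual ℝ (EuclideanSpace ℝ (Fin n))) (gradient F x)
      = (InnerProductSpace.toDual ℝ (EuclideanSpace ℝ (Fin n))) (c • gradient F x) :=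
    ((InnerProductSpace.toDual ℝ (EuclideanSpace ℝ (Fin n))).map_smul c (gradient F x)).symm
  rw [heq] at hcomp
  have hgrad : HasGradientAt (fun y => smoothAuxH α u (F y) τ) (c • gradient F x) x := by
    have := hcomp.hasGradientAt
    simpa only [LinearIsometryEquiv.symm_apply_apply] using this
  exact ⟨hgrad.differentiableAt, hgrad.gradient⟩
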